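/- Suppose Ŷ(t) satisfies Ŷ'(t) = k₁·T(t)·P(t) - k₃·F(t)·Ŷ(t), where T, F, P : ℝ≥0 → ℝ≥0 are continuous, P is bounded, lim_{t→∞} T(t) = 0, and lim_{t→∞} F(t) = 1. Then lim_{t→∞} Ŷ(t) = 0. -/

import Mathlib

open intervalIntegral Real Filter

theorem key (Yh T F P : ℝ → ℝ) (k₁ k₃ : ℝ) (hk₃ : 0 < k₃)
    (hTc : Continuous T) (hFc : Continuous F) (hPc : Continuous P)
    (hYh : ∀ t : ℝ, 0 ≤ t → HasDerivAt Yh (k₁ * T t * P t - k₃ * F t * Yh t) t)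
    (t₀ : ℝ) (ht₀ : 0 ≤ t₀) (ε' : ℝ) (hε' : 0 ≤ ε')
    (hFlb : ∀ s, t₀ ≤ s → (1:ℝ)/2 ≤ F s)
    (hg : ∀ s, t₀ ≤ s → |k₁ * T s * P s| ≤ ε') :
    ∀ t, t₀ ≤ t → |Yh t| ≤ Real.exp (-(k₃/2) * (t - t₀)) * |Yh t₀| + ε' * (2/k₃) := by
  intro t ht
  set G : ℝ → ℝ := fun u => ∫ s in t₀..u, k₃ * F s with hGdef
  have hGF : Continuous fun s => k₃ * F s := continuous_const.mul hFc
  have hG : ∀ u, HasDerivAt G (k₃ * F u) u := fun u =>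
    (hGF.integral_hasStrictDerivAt t₀ u).hasDerivAt
  have hGc : Continuous G := continuous_iff_continuousAt.2 fun u => (hG u).continuousAt
  have hG0 : G t₀ = 0 := intervalIntegral.integral_same
  -- lower bound on G t
  have hGlb : (k₃/2) * (t - t₀) ≤ G t := by
    have h1 : (∫ s in t₀..t, (k₃/2 : ℝ)) ≤ ∫ s in t₀..t, k₃ * F s := by
      apply intervalIntegral.integral_mono_on ht
      · exact intervalIntegrable_const
      · exact hGF.intervalIntegrable _ _
      · intro x hx
        have := hFlb x hx.1
        nlinarith
    calc (k₃/2) * (t - t₀) = ∫ s in t₀..t, (k₃/2 : ℝ) := by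
          rw [intervalIntegral.integral_const, smul_eq_mul]; ring
      _ ≤ G t := h1
  -- Z and its derivative
  set Z : ℝ → ℝ := fun u => Real.exp (G u) * Yh u with hZdef
  have hZd : ∀ u, t₀ ≤ u → HasDerivAt Z (Real.exp (G u) * (k₁ * T u * P u)) u := by
    intro u hu
    have h1 := ((hG u).exp).mul (hYh u (le_trans ht₀ hu))
    refine h1.congr_deriv ?_
    ring
  have hderiv_cont : Continuous fun u => Real.exp (G u) * (k₁ * T u * P u) := by
    exact (hGc.rexp).mul (((continuous_const.mul hTc)).mul hPc)
  have hZeq : Z t - Z t₀ = ∫ s in t₀..t, Real.exp (G s) * (k₁ * T s * P s) := by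
    rw [intervalIntegral.integral_eq_sub_of_hasDerivAt]
    · intro x hx
      rw [Set.uIcc_of_le ht] at hx
      exact hZd x hx.1
    · exact (hderiv_cont).intervalIntegrable _ _
  -- bound on integral of exp(G s)
  have hExpInt : (∫ s in t₀..t, Real.exp (G s)) ≤ (2/k₃) * (Real.exp (G t) - 1) := by
    have hEd : ∀ u ∈ Set.uIcc t₀ t,
        HasDerivAt (fun v => (2/k₃) * Real.exp (G v)) ((2/k₃) * (k₃ * F u * Real.exp (G u))) u := by
      intro u _
      have := ((hG u).exp).const_mul (2/k₃)
      refine this.congr_deriv ?_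
      ring
    have hFTC : (∫ s in t₀..t, (2/k₃) * (k₃ * F s * Real.exp (G s)))
        = (2/k₃) * Real.exp (G t) - (2/k₃) * Real.exp (G t₀) := by
      apply intervalIntegral.integral_eq_sub_of_hasDerivAt hEd
      exact ((continuous_const.mul ((hGF.mul hGc.rexp))).intervalIntegrable _ _)
    have hmono : (∫ s in t₀..t, Real.exp (G s))
        ≤ ∫ s in t₀..t, (2/k₃) * (k₃ * F s * Real.exp (G s)) := by
      apply intervalIntegral.integral_mono_on ht
      · exact (hGc.rexp).intervalIntegrable _ _
      · exact (continuous_const.mul (hGF.mul hGc.rexp)).intervalIntegrable _ _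
      · intro x hx
        have hF := hFlb x hx.1
        have he : 0 < Real.exp (G x) := Real.exp_pos _
        have heq : 2/k₃ * (k₃ * F x * Real.exp (G x)) = 2 * F x * Real.exp (G x) := by
          field_simp
        rw [heq]
        nlinarith [mul_le_mul_of_nonneg_right hF he.le]
    rw [hG0, Real.exp_zero] at hFTC
    calc (∫ s in t₀..t, Real.exp (G s)) ≤ _ := hmono
      _ = _ := by rw [hFTC]; ring
  -- main bound
  have hYt : Yh t = Real.exp (-G t) * Yh t₀
      + Real.exp (-G t) * ∫ s in t₀..t, Real.exp (G s) * (k₁ * T s * P s) := by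
    have h : Z t = Z t₀ + ∫ s in t₀..t, Real.exp (G s) * (k₁ * T s * P s) := by
      linarith [hZeq]
    have he : Real.exp (G t) ≠ 0 := (Real.exp_pos _).ne'
    have := congrArg (fun x => Real.exp (-G t) * x) h
    simp only [hZdef] at this
    rw [hG0, Real.exp_zero, one_mul] at this
    have h2 : Real.exp (-G t) * Real.exp (G t) = 1 := by rw [← Real.exp_add]; simp
    calc Yh t = Real.exp (-G t) * (Real.exp (G t) * Yh t) := by
          rw [← mul_assoc, h2, one_mul]
      _ = Real.exp (-G t) * (Yh t₀ + ∫ s in t₀..t, Real.exp (G s) * (k₁ * T s * P s)) := this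
      _ = _ := by ring
  have habs : |Yh t| ≤ Real.exp (-G t) * |Yh t₀|
      + Real.exp (-G t) * (ε' * ((2/k₃) * Real.exp (G t))) := by
    rw [hYt]
    refine le_trans (abs_add_le _ _) ?_
    have h1 : |Real.exp (-G t) * Yh t₀| = Real.exp (-G t) * |Yh t₀| := by
      rw [abs_mul, abs_of_pos (Real.exp_pos _)]
    have h2 : |Real.exp (-G t) * ∫ s in t₀..t, Real.exp (G s) * (k₁ * T s * P s)|
        ≤ Real.exp (-G t) * (ε' * ((2/k₃) * Real.exp (G t))) := by
      rw [abs_mul, abs_of_pos (Real.exp_pos _)]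
      refine mul_le_mul_of_nonneg_left ?_ (Real.exp_pos _).le
      calc |∫ s in t₀..t, Real.exp (G s) * (k₁ * T s * P s)|
          ≤ ∫ s in t₀..t, |Real.exp (G s) * (k₁ * T s * P s)| := by
            apply intervalIntegral.abs_integral_le_integral_abs ht
        _ ≤ ∫ s in t₀..t, ε' * Real.exp (G s) := by
            apply intervalIntegral.integral_mono_on ht
            · exact (hderiv_cont.abs).intervalIntegrable _ _
            · exact (continuous_const.mul hGc.rexp).intervalIntegrable _ _
            · intro x hx
              rw [abs_mul, abs_of_pos (Real.exp_pos _), mul_comm]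
              exact mul_le_mul_of_nonneg_right (hg x hx.1) (Real.exp_pos _).le
        _ = ε' * ∫ s in t₀..t, Real.exp (G s) := by
            rw [intervalIntegral.integral_const_mul]
        _ ≤ ε' * ((2/k₃) * (Real.exp (G t) - 1)) := by
            apply mul_le_mul_of_nonneg_left _ hε'
            exact hExpInt
        _ ≤ ε' * ((2/k₃) * Real.exp (G t)) := by
            apply mul_le_mul_of_nonneg_left _ hε'
            have : (0:ℝ) < 2/k₃ := by positivity
            nlinarith [Real.exp_pos (G t)]
    rw [h1]
    exact add_le_add le_rfl h2
  have hexple : Real.exp (-G t) ≤ Real.exp (-(k₃/2) * (t - t₀)) := by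
    apply Real.exp_le_exp.2
    linarith
  calc |Yh t| ≤ _ := habs
    _ = Real.exp (-G t) * |Yh t₀| + ε' * (2/k₃) * (Real.exp (-G t) * Real.exp (G t)) := by ring
    _ = Real.exp (-G t) * |Yh t₀| + ε' * (2/k₃) := by
        rw [← Real.exp_add]; simp
    _ ≤ _ := by gcongr

theorem stmt_14 (Yh T F P : ℝ → ℝ) (k₁ k₃ : ℝ) (hk₁ : 0 < k₁) (hk₃ : 0 < k₃)
    (hTc : Continuous T) (hFc : Continuous F) (hPc : Continuous P)
    (hTnn : ∀ t : ℝ, 0 ≤ t → 0 ≤ T t)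
    (hFnn : ∀ t : ℝ, 0 ≤ t → 0 ≤ F t)
    (hPnn : ∀ t : ℝ, 0 ≤ t → 0 ≤ P t)
    (hPbd : ∃ M : ℝ, ∀ t : ℝ, 0 ≤ t → P t ≤ M)
    (hT : Filter.Tendsto T Filter.atTop (nhds 0))
    (hF : Filter.Tendsto F Filter.atTop (nhds 1))
    (hYh : ∀ t : ℝ, 0 ≤ t → HasDerivAt Yh (k₁ * T t * P t - k₃ * F t * Yh t) t) :
    Filter.Tendsto Yh Filter.atTop (nhds 0) := by
  rw [NormedAddCommGroup.tendsto_nhds_zero]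
  intro ε hε
  obtain ⟨M, hM⟩ := hPbd
  set M' : ℝ := max M 0 + 1 with hM'def
  have hM'pos : 0 < M' := by positivity
  set ε' : ℝ := ε * k₃ / 8 with hε'def
  have hε'pos : 0 < ε' := by positivity
  set δ : ℝ := ε' / (k₁ * M') with hδdef
  have hδpos : 0 < δ := by positivity
  have h1 : ∀ᶠ t in atTop, (1:ℝ)/2 ≤ F t :=
    hF.eventually (eventually_ge_nhds (by norm_num : (1:ℝ)/2 < 1))
  have h2 : ∀ᶠ t in atTop, T t ≤ δ := hT.eventually (eventually_le_nhds hδpos)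
  have h3 : ∀ᶠ t in atTop, (0:ℝ) ≤ t := eventually_ge_atTop 0
  obtain ⟨a, ha⟩ := Filter.eventually_atTop.mp (h1.and (h2.and h3))
  set t₀ : ℝ := max a 0 with ht₀def
  have ht₀0 : (0:ℝ) ≤ t₀ := le_max_right _ _
  have ha' : ∀ s, t₀ ≤ s → (1/2 ≤ F s ∧ T s ≤ δ ∧ 0 ≤ s) :=
    fun s hs => ha s (le_trans (le_max_left _ _) hs)
  have hgbd : ∀ s, t₀ ≤ s → |k₁ * T s * P s| ≤ ε' := by
    intro s hs
    obtain ⟨_, hTs, hs0⟩ := ha' s hs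
    have hTnn' := hTnn s hs0
    have hPnn' := hPnn s hs0
    have hPs : P s ≤ M' := le_trans (hM s hs0) (le_trans (le_max_left _ _) (by linarith))
    rw [abs_of_nonneg (by positivity)]
    have hkey : k₁ * δ * M' = ε' := by
      rw [hδdef]; field_simp
    nlinarith [mul_le_mul hTs hPs hPnn' hδpos.le, mul_le_mul_of_nonneg_left (mul_le_mul hTs hPs hPnn' hδpos.le) hk₁.le]
  have hbound := key Yh T F P k₁ k₃ hk₃ hTc hFc hPc hYh t₀ ht₀0 ε' hε'pos.le
    (fun s hs => (ha' s hs).1) hgbd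
  have hexp : Filter.Tendsto (fun t => Real.exp (-(k₃/2) * (t - t₀)) * |Yh t₀|)
      Filter.atTop (nhds 0) := by
    have hlin : Filter.Tendsto (fun t : ℝ => -(k₃/2) * (t - t₀)) Filter.atTop Filter.atBot := by
      apply Filter.Tendsto.const_mul_atTop_of_neg (by linarith : -(k₃/2) < 0)
      exact tendsto_atTop_add_const_right _ (-t₀) tendsto_id
    have := (Real.tendsto_exp_atBot.comp hlin).mul_const |Yh t₀|
    simpa using this
  have h4 : ∀ᶠ t in Filter.atTop,
      Real.exp (-(k₃/2) * (t - t₀)) * |Yh t₀| < ε/2 :=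
    hexp.eventually (eventually_lt_nhds (by linarith))
  filter_upwards [h4, eventually_ge_atTop t₀] with t hlt hge
  have hb := hbound t hge
  have he2 : ε' * (2/k₃) = ε/4 := by
    rw [hε'def]; field_simp; ring
  rw [Real.norm_eq_abs]
  linarith
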